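/- Let $a_1 \ge 0$ and $A > 0$, and define recursively $a_{m+1} = \max(a_m - A a_m^3, 0)$. If $a_1 \le A^{-1/2}$, then the sequence $(a_m)$ is nonincreasing and $a_m \le A^{-1/2} m^{-1/2}$ for all $m \ge 1$. -/
import Mathlib

lemma key16 (M t : ℝ) (hM : 1 ≤ M) (ht : 0 ≤ t) (htM : t * M ≤ 1) :
    Real.sqrt (M^2 + 1) * (t - t^3) ≤ 1 := by
  set N := Real.sqrt (M^2+1) with hN
  have hN0 : 0 ≤ N := Real.sqrt_nonneg _
  have hN2 : N^2 = M^2 + 1 := Real.sq_sqrt (by positivity)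
  have ht1 : t ≤ 1 := by nlinarith
  have h0 : 0 ≤ t*M := mul_nonneg ht (by linarith)
  have hsm : t^2 * M^2 ≤ 1 := by nlinarith [mul_le_mul htM htM h0 zero_le_one]
  have hpoly : (M^2+1) * (t - t^3)^2 ≤ 1 := by
    nlinarith [mul_nonneg (sub_nonneg.2 hsm) (sq_nonneg (1 - t^2)),
      mul_nonneg (sq_nonneg t) (sub_nonneg.2 (by nlinarith [pow_le_one₀ ht ht1 (n := 4)] : t^4 ≤ 1)),
      sq_nonneg t, sq_nonneg (t*(1-t^2))]
  nlinarith [sq_nonneg (N * (t - t^3) - 1), sq_nonneg (N*(t-t^3))]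

theorem stmt_16 (a : ℕ → ℝ) (A : ℝ) (hA : 0 < A)
    (h1 : 0 ≤ a 1) (hsmall : a 1 ≤ 1 / Real.sqrt A)
    (hrec : ∀ m, 1 ≤ m → a (m + 1) = max (a m - A * (a m) ^ 3) 0) :
    (∀ m, 1 ≤ m → a (m + 1) ≤ a m) ∧
    (∀ m : ℕ, 1 ≤ m → a m ≤ (1 / Real.sqrt A) * (1 / Real.sqrt m)) := by
  set c := Real.sqrt A with hc
  have hc0 : 0 < c := Real.sqrt_pos.2 hA
  have hc2 : c^2 = A := Real.sq_sqrt hA.le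
  have hnn : ∀ m, 1 ≤ m → 0 ≤ a m := by
    intro m hm
    match m, hm with
    | 1, _ => exact h1
    | (n+2), _ => rw [hrec (n+1) (by omega)]; exact le_max_right _ _
  have hmono : ∀ m, 1 ≤ m → a (m+1) ≤ a m := by
    intro m hm
    rw [hrec m hm]
    refine max_le ?_ (hnn m hm)
    nlinarith [mul_nonneg hA.le (pow_nonneg (hnn m hm) 3)]
  refine ⟨hmono, ?_⟩
  intro m hm
  induction m with
  | zero => omega
  | succ n ih =>
    rcases Nat.lt_or_ge n 1 with h | hn
    · interval_cases n
      simpa [Real.sqrt_one] using hsmall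
    · have ihn := ih hn
      set M := Real.sqrt n with hMdef
      have hn1 : (1:ℝ) ≤ (n:ℝ) := by exact_mod_cast hn
      have hM1 : 1 ≤ M := by
        rw [hMdef, show (1:ℝ) = Real.sqrt 1 by simp]
        exact Real.sqrt_le_sqrt hn1
      have hM0 : 0 < M := lt_of_lt_of_le one_pos hM1
      have hM2 : M^2 = (n:ℝ) := Real.sq_sqrt (by positivity)
      set t := c * a n with htdef
      have ht : 0 ≤ t := mul_nonneg hc0.le (hnn n hn)
      have htM : t * M ≤ 1 := by
        calc t * M = a n * (c * M) := by ring
        _ ≤ ((1/c)*(1/M)) * (c*M) :=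
            mul_le_mul_of_nonneg_right ihn (by positivity)
        _ = 1 := by field_simp
      have key := key16 M t hM1 ht htM
      rw [hM2] at key
      have hcast : ((n+1 : ℕ) : ℝ) = (n:ℝ) + 1 := by push_cast; ring
      rw [hrec n hn, hcast]
      set S := Real.sqrt ((n:ℝ)+1) with hSdef
      have hS0 : 0 < S := Real.sqrt_pos.2 (by linarith)
      refine max_le ?_ (by positivity)
      have keq : t - t^3 = c * (a n - A * a n ^ 3) := by rw [← hc2]; ring
      rw [show (1/c) * (1/S) = 1/(c*S) by rw [div_mul_div_comm, one_mul]]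
      rw [le_div_iff₀ (by positivity)]
      calc (a n - A * a n ^ 3) * (c * S) = S * (t - t^3) := by rw [keq]; ring
      _ ≤ 1 := key
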